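/- For κ = 7, with ⟨x⟩ = sin(πx/7)/sin(π/7) for real x, define for nonnegative integers λ1, λ2 the quantity qdimG2(λ1,λ2) = ⟨λ1+1⟩·⟨λ2/3+1/3⟩·⟨λ1+λ2/3+4/3⟩·⟨λ1+2λ2/3+5/3⟩·⟨λ1+λ2+2⟩·⟨2λ1+λ2+3⟩ / (⟨1/3⟩·⟨1⟩·⟨4/3⟩·⟨5/3⟩·⟨2⟩·⟨3⟩). Then qdimG2(0,1) = (3+√21)/2, qdimG2(0,2) = (7+√21)/2, qdimG2(1,0) = (3+√21)/2, and qdimG2(1,1) = (5+√21)/2. -/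

import Mathlib

/-- The q-number at altitude `κ`: `⟨x⟩ = sin(πx/κ)/sin(π/κ)`. -/
noncomputable def qnum (κ x : ℝ) : ℝ := Real.sin (Real.pi * x / κ) / Real.sin (Real.pi / κ)

/-- The quantum Weyl dimension of the irreducible G2 representation of highest weight
`{λ1,λ2}` at altitude κ = 7 (level k = 3). -/
noncomputable def qdimG2 (lam1 lam2 : ℕ) : ℝ :=
    qnum 7 (lam1 + 1) * qnum 7 (lam2 / 3 + 1/3) * qnum 7 (lam1 + lam2 / 3 + 4/3) *
      qnum 7 (lam1 + 2 * lam2 / 3 + 5/3) * qnum 7 (lam1 + lam2 + 2) *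
      qnum 7 (2 * lam1 + lam2 + 3) /
    (qnum 7 (1/3) * qnum 7 1 * qnum 7 (4/3) * qnum 7 (5/3) * qnum 7 2 * qnum 7 3)

lemma qnum7 (x : ℝ) : qnum 7 x = Real.sin (3*x*(Real.pi/21)) / Real.sin (3*(Real.pi/21)) := by
  simp only [qnum]
  rw [show Real.pi * x / 7 = 3*x*(Real.pi/21) by ring, show Real.pi/7 = 3*(Real.pi/21) by ring]

lemma aux_hg (C : ℝ) (hhalf : 1/2 < C) (hCle : C ≤ 1)
    (h7 : -(7 * C) + 56 * C ^ 3 + -(112 * C ^ 5) + 64 * C ^ 7 = 1/2) :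
    Real.sqrt 21 = (-3 + 24 * C + 32 * C ^ 2 + -(80 * C ^ 3) + -(32 * C ^ 4) + 64 * C ^ 5) ∧ (1 + 16 * C + 32 * C ^ 2 + -(48 * C ^ 3) + -(96 * C ^ 4) + 32 * C ^ 5 + 64 * C ^ 6) = 0 := by
  have hz : (2*C - 1) * (1 + 16 * C + 32 * C ^ 2 + -(48 * C ^ 3) + -(96 * C ^ 4) + 32 * C ^ 5 + 64 * C ^ 6) = 0 := by linear_combination 2 * h7
  have hm : (1 + 16 * C + 32 * C ^ 2 + -(48 * C ^ 3) + -(96 * C ^ 4) + 32 * C ^ 5 + 64 * C ^ 6) = 0 := by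
    rcases mul_eq_zero.mp hz with h | h
    · linarith
    · exact h
  have hg2 : (-3 + 24 * C + 32 * C ^ 2 + -(80 * C ^ 3) + -(32 * C ^ 4) + 64 * C ^ 5)^2 = 21 := by linear_combination (-12 + 48 * C + -(96 * C ^ 3) + 64 * C ^ 4) * hm
  have hgnn : 0 ≤ (-3 + 24 * C + 32 * C ^ 2 + -(80 * C ^ 3) + -(32 * C ^ 4) + 64 * C ^ 5) := by
    nlinarith [sq_nonneg ((C-1/2)^2 - 7/32), pow_nonneg (by linarith : (0:ℝ) ≤ C - 1/2) 3,
      pow_nonneg (by linarith : (0:ℝ) ≤ C - 1/2) 5]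
  exact ⟨by rw [← hg2, Real.sqrt_sq hgnn], hm⟩

set_option maxHeartbeats 4000000 in
/-- Quantum dimensions of the simple objects `{0,1}`, `{0,2}`, `{1,0}`, `{1,1}` of
`A₃(G₂)`. -/
theorem g2_level3_qdims :
    qdimG2 0 1 = (3 + Real.sqrt 21) / 2 ∧
    qdimG2 0 2 = (7 + Real.sqrt 21) / 2 ∧
    qdimG2 1 0 = (3 + Real.sqrt 21) / 2 ∧
    qdimG2 1 1 = (5 + Real.sqrt 21) / 2 := by
  have hpi := Real.pi_pos
  set C := Real.cos (Real.pi/21) with hCdef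
  set S := Real.sin (Real.pi/21) with hSdef
  have hpy : S^2 = 1 - C^2 := by
    have := Real.sin_sq_add_cos_sq (Real.pi/21); rw [← hCdef, ← hSdef] at this; linarith
  have hpos1 : 0 < S := by rw [hSdef]; exact Real.sin_pos_of_pos_of_lt_pi (by positivity) (by linarith)
  have hpos2 : 0 < Real.sin (2 * (Real.pi/21)) := Real.sin_pos_of_pos_of_lt_pi (by positivity) (by linarith)
  have hpos3 : 0 < Real.sin (3 * (Real.pi/21)) := Real.sin_pos_of_pos_of_lt_pi (by positivity) (by linarith)
  have hpos4 : 0 < Real.sin (4 * (Real.pi/21)) := Real.sin_pos_of_pos_of_lt_pi (by positivity) (by linarith)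
  have hpos5 : 0 < Real.sin (5 * (Real.pi/21)) := Real.sin_pos_of_pos_of_lt_pi (by positivity) (by linarith)
  have hpos6 : 0 < Real.sin (6 * (Real.pi/21)) := Real.sin_pos_of_pos_of_lt_pi (by positivity) (by linarith)
  have hpos7 : 0 < Real.sin (7 * (Real.pi/21)) := Real.sin_pos_of_pos_of_lt_pi (by positivity) (by linarith)
  have hpos8 : 0 < Real.sin (8 * (Real.pi/21)) := Real.sin_pos_of_pos_of_lt_pi (by positivity) (by linarith)
  have hpos9 : 0 < Real.sin (9 * (Real.pi/21)) := Real.sin_pos_of_pos_of_lt_pi (by positivity) (by linarith)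
  have hpos10 : 0 < Real.sin (10 * (Real.pi/21)) := Real.sin_pos_of_pos_of_lt_pi (by positivity) (by linarith)
  have hpos12 : 0 < Real.sin (12 * (Real.pi/21)) := Real.sin_pos_of_pos_of_lt_pi (by positivity) (by linarith)
  have hpos15 : 0 < Real.sin (15 * (Real.pi/21)) := Real.sin_pos_of_pos_of_lt_pi (by positivity) (by linarith)
  have hpos18 : 0 < Real.sin (18 * (Real.pi/21)) := Real.sin_pos_of_pos_of_lt_pi (by positivity) (by linarith)
  have hsin2 : Real.sin (2 * (Real.pi/21)) = (2 * C) * S := by rw [show (2:ℝ)*(Real.pi/21) = Real.pi/21 + Real.pi/21 by ring, Real.sin_add, ← hCdef, ← hSdef]; ring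
  have hcos2 : Real.cos (2 * (Real.pi/21)) = -1 + 2 * C ^ 2 := by rw [show (2:ℝ)*(Real.pi/21) = Real.pi/21 + Real.pi/21 by ring, Real.cos_add, ← hCdef, ← hSdef]; linear_combination (-1 : ℝ) * hpy
  have hsin3 : Real.sin (3 * (Real.pi/21)) = (-1 + 4 * C ^ 2) * S := by rw [show (3:ℝ)*(Real.pi/21) = 2*(Real.pi/21) + Real.pi/21 by ring, Real.sin_add, hsin2, hcos2, ← hCdef, ← hSdef]; ring
  have hcos3 : Real.cos (3 * (Real.pi/21)) = -(3 * C) + 4 * C ^ 3 := by rw [show (3:ℝ)*(Real.pi/21) = 2*(Real.pi/21) + Real.pi/21 by ring, Real.cos_add, hsin2, hcos2, ← hCdef, ← hSdef]; linear_combination (-(2 * C)) * hpy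
  have hsin4 : Real.sin (4 * (Real.pi/21)) = (-(4 * C) + 8 * C ^ 3) * S := by rw [show (4:ℝ)*(Real.pi/21) = 3*(Real.pi/21) + Real.pi/21 by ring, Real.sin_add, hsin3, hcos3, ← hCdef, ← hSdef]; ring
  have hcos4 : Real.cos (4 * (Real.pi/21)) = 1 + -(8 * C ^ 2) + 8 * C ^ 4 := by rw [show (4:ℝ)*(Real.pi/21) = 3*(Real.pi/21) + Real.pi/21 by ring, Real.cos_add, hsin3, hcos3, ← hCdef, ← hSdef]; linear_combination (1 + -(4 * C ^ 2)) * hpy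
  have hsin5 : Real.sin (5 * (Real.pi/21)) = (1 + -(12 * C ^ 2) + 16 * C ^ 4) * S := by rw [show (5:ℝ)*(Real.pi/21) = 4*(Real.pi/21) + Real.pi/21 by ring, Real.sin_add, hsin4, hcos4, ← hCdef, ← hSdef]; ring
  have hcos5 : Real.cos (5 * (Real.pi/21)) = 5 * C + -(20 * C ^ 3) + 16 * C ^ 5 := by rw [show (5:ℝ)*(Real.pi/21) = 4*(Real.pi/21) + Real.pi/21 by ring, Real.cos_add, hsin4, hcos4, ← hCdef, ← hSdef]; linear_combination (4 * C + -(8 * C ^ 3)) * hpy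
  have hsin6 : Real.sin (6 * (Real.pi/21)) = (6 * C + -(32 * C ^ 3) + 32 * C ^ 5) * S := by rw [show (6:ℝ)*(Real.pi/21) = 5*(Real.pi/21) + Real.pi/21 by ring, Real.sin_add, hsin5, hcos5, ← hCdef, ← hSdef]; ring
  have hcos6 : Real.cos (6 * (Real.pi/21)) = -1 + 18 * C ^ 2 + -(48 * C ^ 4) + 32 * C ^ 6 := by rw [show (6:ℝ)*(Real.pi/21) = 5*(Real.pi/21) + Real.pi/21 by ring, Real.cos_add, hsin5, hcos5, ← hCdef, ← hSdef]; linear_combination (-1 + 12 * C ^ 2 + -(16 * C ^ 4)) * hpy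
  have hsin7 : Real.sin (7 * (Real.pi/21)) = (-1 + 24 * C ^ 2 + -(80 * C ^ 4) + 64 * C ^ 6) * S := by rw [show (7:ℝ)*(Real.pi/21) = 6*(Real.pi/21) + Real.pi/21 by ring, Real.sin_add, hsin6, hcos6, ← hCdef, ← hSdef]; ring
  have hcos7 : Real.cos (7 * (Real.pi/21)) = -(7 * C) + 56 * C ^ 3 + -(112 * C ^ 5) + 64 * C ^ 7 := by rw [show (7:ℝ)*(Real.pi/21) = 6*(Real.pi/21) + Real.pi/21 by ring, Real.cos_add, hsin6, hcos6, ← hCdef, ← hSdef]; linear_combination (-(6 * C) + 32 * C ^ 3 + -(32 * C ^ 5)) * hpy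
  have hsin8 : Real.sin (8 * (Real.pi/21)) = (-(8 * C) + 80 * C ^ 3 + -(192 * C ^ 5) + 128 * C ^ 7) * S := by rw [show (8:ℝ)*(Real.pi/21) = 7*(Real.pi/21) + Real.pi/21 by ring, Real.sin_add, hsin7, hcos7, ← hCdef, ← hSdef]; ring
  have hcos8 : Real.cos (8 * (Real.pi/21)) = 1 + -(32 * C ^ 2) + 160 * C ^ 4 + -(256 * C ^ 6) + 128 * C ^ 8 := by rw [show (8:ℝ)*(Real.pi/21) = 7*(Real.pi/21) + Real.pi/21 by ring, Real.cos_add, hsin7, hcos7, ← hCdef, ← hSdef]; linear_combination (1 + -(24 * C ^ 2) + 80 * C ^ 4 + -(64 * C ^ 6)) * hpy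
  have hsin9 : Real.sin (9 * (Real.pi/21)) = (1 + -(40 * C ^ 2) + 240 * C ^ 4 + -(448 * C ^ 6) + 256 * C ^ 8) * S := by rw [show (9:ℝ)*(Real.pi/21) = 8*(Real.pi/21) + Real.pi/21 by ring, Real.sin_add, hsin8, hcos8, ← hCdef, ← hSdef]; ring
  have hcos9 : Real.cos (9 * (Real.pi/21)) = 9 * C + -(120 * C ^ 3) + 432 * C ^ 5 + -(576 * C ^ 7) + 256 * C ^ 9 := by rw [show (9:ℝ)*(Real.pi/21) = 8*(Real.pi/21) + Real.pi/21 by ring, Real.cos_add, hsin8, hcos8, ← hCdef, ← hSdef]; linear_combination (8 * C + -(80 * C ^ 3) + 192 * C ^ 5 + -(128 * C ^ 7)) * hpy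
  have hsin10 : Real.sin (10 * (Real.pi/21)) = (10 * C + -(160 * C ^ 3) + 672 * C ^ 5 + -(1024 * C ^ 7) + 512 * C ^ 9) * S := by rw [show (10:ℝ)*(Real.pi/21) = 9*(Real.pi/21) + Real.pi/21 by ring, Real.sin_add, hsin9, hcos9, ← hCdef, ← hSdef]; ring
  have hu2 : 0 < (2 * C) := by
    rcases mul_pos_iff.mp (hsin2 ▸ hpos2) with ⟨h,_⟩ | ⟨_,h⟩
    · exact h
    · linarith [hpos1]
  have hu3 : 0 < (-1 + 4 * C ^ 2) := by
    rcases mul_pos_iff.mp (hsin3 ▸ hpos3) with ⟨h,_⟩ | ⟨_,h⟩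
    · exact h
    · linarith [hpos1]
  have hu4 : 0 < (-(4 * C) + 8 * C ^ 3) := by
    rcases mul_pos_iff.mp (hsin4 ▸ hpos4) with ⟨h,_⟩ | ⟨_,h⟩
    · exact h
    · linarith [hpos1]
  have hu5 : 0 < (1 + -(12 * C ^ 2) + 16 * C ^ 4) := by
    rcases mul_pos_iff.mp (hsin5 ▸ hpos5) with ⟨h,_⟩ | ⟨_,h⟩
    · exact h
    · linarith [hpos1]
  have hu6 : 0 < (6 * C + -(32 * C ^ 3) + 32 * C ^ 5) := by
    rcases mul_pos_iff.mp (hsin6 ▸ hpos6) with ⟨h,_⟩ | ⟨_,h⟩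
    · exact h
    · linarith [hpos1]
  have hu7 : 0 < (-1 + 24 * C ^ 2 + -(80 * C ^ 4) + 64 * C ^ 6) := by
    rcases mul_pos_iff.mp (hsin7 ▸ hpos7) with ⟨h,_⟩ | ⟨_,h⟩
    · exact h
    · linarith [hpos1]
  have hu8 : 0 < (-(8 * C) + 80 * C ^ 3 + -(192 * C ^ 5) + 128 * C ^ 7) := by
    rcases mul_pos_iff.mp (hsin8 ▸ hpos8) with ⟨h,_⟩ | ⟨_,h⟩
    · exact h
    · linarith [hpos1]
  have hu9 : 0 < (1 + -(40 * C ^ 2) + 240 * C ^ 4 + -(448 * C ^ 6) + 256 * C ^ 8) := by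
    rcases mul_pos_iff.mp (hsin9 ▸ hpos9) with ⟨h,_⟩ | ⟨_,h⟩
    · exact h
    · linarith [hpos1]
  have hu10 : 0 < (10 * C + -(160 * C ^ 3) + 672 * C ^ 5 + -(1024 * C ^ 7) + 512 * C ^ 9) := by
    rcases mul_pos_iff.mp (hsin10 ▸ hpos10) with ⟨h,_⟩ | ⟨_,h⟩
    · exact h
    · linarith [hpos1]
  have hsin12 : Real.sin (12 * (Real.pi/21)) = Real.sin (9 * (Real.pi/21)) := by rw [show (12:ℝ)*(Real.pi/21) = Real.pi - 9*(Real.pi/21) by ring, Real.sin_pi_sub]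
  have hsin15 : Real.sin (15 * (Real.pi/21)) = Real.sin (6 * (Real.pi/21)) := by rw [show (15:ℝ)*(Real.pi/21) = Real.pi - 6*(Real.pi/21) by ring, Real.sin_pi_sub]
  have hsin18 : Real.sin (18 * (Real.pi/21)) = Real.sin (3 * (Real.pi/21)) := by rw [show (18:ℝ)*(Real.pi/21) = Real.pi - 3*(Real.pi/21) by ring, Real.sin_pi_sub]
  have hhalf : 1/2 < C := by
    have h := Real.cos_lt_cos_of_nonneg_of_le_pi (by positivity : (0:ℝ) ≤ Real.pi/21) (by linarith : Real.pi/3 ≤ Real.pi) (by linarith)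
    rw [Real.cos_pi_div_three, ← hCdef] at h; linarith
  have hCle : C ≤ 1 := by rw [hCdef]; exact Real.cos_le_one _
  have h7 : Real.cos (7 * (Real.pi/21)) = 1/2 := by rw [show (7:ℝ)*(Real.pi/21) = Real.pi/3 by ring, Real.cos_pi_div_three]
  rw [hcos7] at h7
  obtain ⟨hgs, hm⟩ := aux_hg C hhalf hCle h7
  refine ⟨?_, ?_, ?_, ?_⟩
  · simp only [qdimG2, qnum7]
    norm_num
    rw [hgs, ← hSdef, hsin12, hsin2, hsin3, hsin4, hsin5, hsin6, hsin7, hsin9]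
    simp only [div_mul_div_comm, div_div_div_eq]
    rw [div_eq_div_iff (by apply_rules [mul_ne_zero, hpos1.ne', hu2.ne', hu3.ne', hu4.ne', hu5.ne', hu6.ne', hu7.ne', hu8.ne', hu9.ne', hu10.ne']) two_ne_zero]
    linear_combination ((4) * C ^ 1 * S ^ 12 + (-64) * C ^ 2 * S ^ 12 + (-256) * C ^ 3 * S ^ 12 + (5568) * C ^ 4 * S ^ 12 + (4352) * C ^ 5 * S ^ 12 + (-198528) * C ^ 6 * S ^ 12 + (37376) * C ^ 7 * S ^ 12 + (4039168) * C ^ 8 * S ^ 12 + (-2603008) * C ^ 9 * S ^ 12 + (-53719040) * C ^ 10 * S ^ 12 + (48902144) * C ^ 11 * S ^ 12 + (501645312) * C ^ 12 * S ^ 12 + (-545587200) * C ^ 13 * S ^ 12 + (-3428941824) * C ^ 14 * S ^ 12 + (4175691776) * C ^ 15 * S ^ 12 + (17584357376) * C ^ 16 * S ^ 12 + (-23227531264) * C ^ 17 * S ^ 12 + (-68575297536) * C ^ 18 * S ^ 12 + (96547635200) * C ^ 19 * S ^ 12 + (204401016832) * C ^ 20 * S ^ 12 + (-303583723520) * C ^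 21 * S ^ 12 + (-464535945216) * C ^ 22 * S ^ 12 + (723332890624) * C ^ 23 * S ^ 12 + (796749987840) * C ^ 24 * S ^ 12 + (-1295872163840) * C ^ 25 * S ^ 12 + (-1010927927296) * C ^ 26 * S ^ 12 + (1713960386560) * C ^ 27 * S ^ 12 + (916975517696) * C ^ 28 * S ^ 12 + (-1619202670592) * C ^ 29 * S ^ 12 + (-560493232128) * C ^ 30 * S ^ 12 + (1030792151040) * C ^ 31 * S ^ 12 + (206158430208) * C ^ 32 * S ^ 12 + (-395136991232) * C ^ 33 * S ^ 12 + (-34359738368) * C ^ 34 * S ^ 12 + (68719476736) * C ^ 35 * S ^ 12) * hm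
  · simp only [qdimG2, qnum7]
    norm_num
    rw [hgs, ← hSdef, hsin12, hsin15, hsin3, hsin4, hsin5, hsin6, hsin9]
    simp only [div_mul_div_comm, div_div_div_eq]
    rw [div_eq_div_iff (by apply_rules [mul_ne_zero, hpos1.ne', hu2.ne', hu3.ne', hu4.ne', hu5.ne', hu6.ne', hu7.ne', hu8.ne', hu9.ne', hu10.ne']) two_ne_zero]
    linear_combination ((-24) * C ^ 2 * S ^ 12 + (-192) * C ^ 3 * S ^ 12 + (2624) * C ^ 4 * S ^ 12 + (15232) * C ^ 5 * S ^ 12 + (-116736) * C ^ 6 * S ^ 12 + (-483840) * C ^ 7 * S ^ 12 + (2846720) * C ^ 8 * S ^ 12 + (8799232) * C ^ 9 * S ^ 12 + (-44113920) * C ^ 10 * S ^ 12 + (-105721856) * C ^ 11 * S ^ 12 + (472457216) * C ^ 12 * S ^ 12 + (903856128) * C ^ 13 * S ^ 12 + (-3680632832) * C ^ 14 * S ^ 12 + (-5740036096) * C ^ 15 * S ^ 12 + (21541421056) * C ^ 16 * S ^ 12 + (27780972544) * C ^ 17 * S ^ 12 + (-96648298496) * C ^ 18 * S ^ 12 + (-103950581760)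 * C ^ 19 * S ^ 12 + (336284614656) * C ^ 20 * S ^ 12 + (302442872832) * C ^ 21 * S ^ 12 + (-911539699712) * C ^ 22 * S ^ 12 + (-682866245632) * C ^ 23 * S ^ 12 + (1920655687680) * C ^ 24 * S ^ 12 + (1184404340736) * C ^ 25 * S ^ 12 + (-3115461902336) * C ^ 26 * S ^ 12 + (-1546456662016) * C ^ 27 * S ^ 12 + (3815541571584) * C ^ 28 * S ^ 12 + (1467805073408) * C ^ 29 * S ^ 12 + (-3410204033024) * C ^ 30 * S ^ 12 + (-953482739712) * C ^ 31 * S ^ 12 + (2095944040448) * C ^ 32 * S ^ 12 + (377957122048) * C ^ 33 * S ^ 12 + (-790273982464) * C ^ 34 * S ^ 12 + (-68719476736) * C ^ 35 * S ^ 12 + (137438953472) * C ^ 36 * S ^ 12) * hm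
  · simp only [qdimG2, qnum7]
    norm_num
    rw [hgs, ← hSdef, hsin15, hsin3, hsin4, hsin5, hsin6, hsin7, hsin8, hsin9]
    simp only [div_mul_div_comm, div_div_div_eq]
    rw [div_eq_div_iff (by apply_rules [mul_ne_zero, hpos1.ne', hu2.ne', hu3.ne', hu4.ne', hu5.ne', hu6.ne', hu7.ne', hu8.ne', hu9.ne', hu10.ne']) two_ne_zero]
    linear_combination ((-768) * C ^ 4 * S ^ 12 + (1920) * C ^ 5 * S ^ 12 + (61696) * C ^ 6 * S ^ 12 + (-152320) * C ^ 7 * S ^ 12 + (-1990144) * C ^ 8 * S ^ 12 + (4829184) * C ^ 9 * S ^ 12 + (36663296) * C ^ 10 * S ^ 12 + (-87298048) * C ^ 11 * S ^ 12 + (-444039168) * C ^ 12 * S ^ 12 + (1036845056) * C ^ 13 * S ^ 12 + (3801186304) * C ^ 14 * S ^ 12 + (-8703246336) * C ^ 15 * S ^ 12 + (-23971758080) * C ^ 16 * S ^ 12 + (53829959680) * C ^ 17 * S ^ 12 + (114089787392) * C ^ 18 * S ^ 12 + (-251388755968) * C ^ 19 * S ^ 12 + (-415129141248) * C ^ 20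 * S ^ 12 + (898231173120) * C ^ 21 * S ^ 12 + (1160043823104) * C ^ 22 * S ^ 12 + (-2467408379904) * C ^ 23 * S ^ 12 + (-2482323324928) * C ^ 24 * S ^ 12 + (5197313081344) * C ^ 25 * S ^ 12 + (4024384356352) * C ^ 26 * S ^ 12 + (-8308345798656) * C ^ 27 * S ^ 12 + (-4843649368064) * C ^ 28 * S ^ 12 + (9880572264448) * C ^ 29 * S ^ 12 + (4181150662656) * C ^ 30 * S ^ 12 + (-8448200671232) * C ^ 31 * S ^ 12 + (-2439541424128) * C ^ 32 * S ^ 12 + (4896262717440) * C ^ 33 * S ^ 12 + (858993459200) * C ^ 34 * S ^ 12 + (-1717986918400) * C ^ 35 * S ^ 12 + (-137438953472) * C ^ 36 * S ^ 12 + (274877906944) * C ^ 37 * S ^ 12) * hm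
  · simp only [qdimG2, qnum7]
    norm_num
    rw [hgs, ← hSdef, hsin12, hsin18, hsin2, hsin3, hsin4, hsin5, hsin6, hsin8, hsin9, hsin10]
    simp only [div_mul_div_comm, div_div_div_eq]
    rw [div_eq_div_iff (by apply_rules [mul_ne_zero, hpos1.ne', hu2.ne', hu3.ne', hu4.ne', hu5.ne', hu6.ne', hu7.ne', hu8.ne', hu9.ne', hu10.ne']) two_ne_zero]
    linear_combination ((-48) * C ^ 2 * S ^ 12 + (192) * C ^ 3 * S ^ 12 + (3808) * C ^ 4 * S ^ 12 + (-17152) * C ^ 5 * S ^ 12 + (-115968) * C ^ 6 * S ^ 12 + (634624) * C ^ 7 * S ^ 12 + (1808384) * C ^ 8 * S ^ 12 + (-13512704) * C ^ 9 * S ^ 12 + (-14225408) * C ^ 10 * S ^ 12 + (189624320) * C ^ 11 * S ^ 12 + (9453568) * C ^ 12 * S ^ 12 + (-1884815360) * C ^ 13 * S ^ 12 + (1084981248) * C ^ 14 * S ^ 12 + (13848215552) * C ^ 15 * S ^ 12 + (-13763870720) * C ^ 16 * S ^ 12 + (-77207437312) * C ^ 17 * S ^ 12 + (99331604480) * C ^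 18 * S ^ 12 + (331793563648) * C ^ 19 * S ^ 12 + (-496794337280) * C ^ 20 * S ^ 12 + (-1107837321216) * C ^ 21 * S ^ 12 + (1829664456704) * C ^ 22 * S ^ 12 + (2878383063040) * C ^ 23 * S ^ 12 + (-5080677875712) * C ^ 24 * S ^ 12 + (-5792434487296) * C ^ 25 * S ^ 12 + (10706011291648) * C ^ 26 * S ^ 12 + (8924136734720) * C ^ 27 * S ^ 12 + (-17028471586816) * C ^ 28 * S ^ 12 + (-10310068994048) * C ^ 29 * S ^ 12 + (20102594428928) * C ^ 30 * S ^ 12 + (8628589297664) * C ^ 31 * S ^ 12 + (-17059610099712) * C ^ 32 * S ^ 12 + (-4930622455808) * C ^ 33 * S ^ 12 + (9826885173248) * C ^ 34 * S ^ 12 + (1717986918400) * C ^ 35 * S ^ 12 + (-3435973836800) * C ^ 36 * S ^ 12 + (-274877906944) * C ^ 37 * S ^ 12 + (549755813888) * C ^ 38 * S ^ 12) * hm
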